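/- Weak theorem of alternatives for common quadratic Lyapunov functions of continuous-time switched linear systems: it cannot simultaneously hold that (a) there exists a symmetric positive definite P ∈ ℝ^{n×n} with A_iᵀP + PA_i negative definite for all i = 1,…,N, and (b) there exist symmetric positive semidefinite matrices R₀, R₁,…,R_N ∈ ℝ^{n×n}, not all zero, with R₀ = Σ_{i=1}^N (A_i R_i + R_i A_iᵀ). -/

import Mathlib

open Matrix

lemma weak_toa_trace_nonneg {n : ℕ} {M : Matrix (Fin n) (Fin n) ℝ} (hM : M.PosSemidef) :
    0 ≤ M.trace := by
  apply Finset.sum_nonneg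
  intro i _
  have := hM.dotProduct_mulVec_nonneg (Pi.single i 1)
  simpa using this

lemma weak_toa_diag_quad {n : ℕ} (P B : Matrix (Fin n) (Fin n) ℝ) (j : Fin n) :
    (B * P * Bᴴ) j j = dotProduct (B j) (P *ᵥ B j) := by
  simp [mul_apply, mulVec, dotProduct, conjTranspose_apply, Finset.mul_sum, Finset.sum_mul]
  rw [Finset.sum_comm]
  congr 1; ext l; congr 1; ext k; ring

lemma weak_toa_trace_mul_nonneg {n : ℕ} {P R : Matrix (Fin n) (Fin n) ℝ}
    (hP : P.PosSemidef) (hR : R.PosSemidef) : 0 ≤ (P * R).trace := by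
  obtain ⟨B, rfl⟩ : ∃ B : Matrix (Fin n) (Fin n) ℝ, R = Bᴴ * B :=
    by open scoped MatrixOrder Matrix.Norms.L2Operator in
    exact CStarAlgebra.nonneg_iff_eq_star_mul_self.mp hR.nonneg
  have h1 : (P * (Bᴴ * B)).trace = (B * P * Bᴴ).trace := by
    rw [← mul_assoc, trace_mul_comm, mul_assoc]
  rw [h1]
  exact weak_toa_trace_nonneg (hP.mul_mul_conjTranspose_same B)

lemma weak_toa_trace_mul_pos {n : ℕ} {P R : Matrix (Fin n) (Fin n) ℝ}
    (hP : P.PosDef) (hR : R.PosSemidef) (hR0 : R ≠ 0) : 0 < (P * R).trace := by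
  obtain ⟨B, rfl⟩ : ∃ B : Matrix (Fin n) (Fin n) ℝ, R = Bᴴ * B :=
    by open scoped MatrixOrder Matrix.Norms.L2Operator in
    exact CStarAlgebra.nonneg_iff_eq_star_mul_self.mp hR.nonneg
  have h1 : (P * (Bᴴ * B)).trace = (B * P * Bᴴ).trace := by
    rw [← mul_assoc, trace_mul_comm, mul_assoc]
  rw [h1]
  have hB : B ≠ 0 := by
    rintro rfl
    simp at hR0
  obtain ⟨j, hj⟩ : ∃ j, B j ≠ 0 := by
    by_contra h
    push_neg at h
    exact hB (by ext j k; simp [h j])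
  have hjpos : 0 < (B * P * Bᴴ) j j := by
    rw [weak_toa_diag_quad]
    have := hP.dotProduct_mulVec_pos hj
    simpa using this
  have hnn : ∀ i ∈ Finset.univ, 0 ≤ (B * P * Bᴴ) i i := by
    intro i _
    have := (hP.posSemidef.mul_mul_conjTranspose_same B).dotProduct_mulVec_nonneg (Pi.single i 1)
    simpa using this
  exact Finset.sum_pos' hnn ⟨j, Finset.mem_univ j, hjpos⟩

theorem weak_toa_cqlf {n N : ℕ} (A : Fin N → Matrix (Fin n) (Fin n) ℝ) :
    ¬ ((∃ P : Matrix (Fin n) (Fin n) ℝ, P.IsSymm ∧ P.PosDef ∧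
        ∀ i, (-((A i)ᵀ * P + P * A i)).PosDef) ∧
      (∃ (R₀ : Matrix (Fin n) (Fin n) ℝ) (R : Fin N → Matrix (Fin n) (Fin n) ℝ),
        R₀.IsSymm ∧ R₀.PosSemidef ∧ (∀ i, (R i).IsSymm ∧ (R i).PosSemidef) ∧
        ¬ (R₀ = 0 ∧ ∀ i, R i = 0) ∧
        R₀ = ∑ i, (A i * R i + R i * (A i)ᵀ))) := by
  rintro ⟨⟨P, _, hP, hQ⟩, R₀, R, _, hR₀, hR, hnz, hsum⟩
  -- trace identity: trace(P R₀) + Σ trace(Q_i R_i) = 0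
  have key : (P * R₀).trace + ∑ i, ((-((A i)ᵀ * P + P * A i)) * R i).trace = 0 := by
    rw [hsum, Matrix.mul_sum, trace_sum, ← Finset.sum_add_distrib]
    apply Finset.sum_eq_zero
    intro i _
    have h1 : ((A i)ᵀ * P * R i).trace = (P * (R i * (A i)ᵀ)).trace := by
      rw [mul_assoc, trace_mul_comm, mul_assoc]
    have h2 : (P * A i * R i).trace = (P * (A i * R i)).trace := by rw [mul_assoc]
    simp only [neg_mul, trace_neg, add_mul, trace_add, mul_add]
    rw [h1, h2]
    ring
  have h0 : 0 ≤ (P * R₀).trace := weak_toa_trace_mul_nonneg hP.posSemidef hR₀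
  have hi : ∀ i ∈ Finset.univ, 0 ≤ ((-((A i)ᵀ * P + P * A i)) * R i).trace := fun i _ =>
    weak_toa_trace_mul_nonneg (hQ i).posSemidef (hR i).2
  by_cases hR₀0 : R₀ = 0
  · have : ∃ i, R i ≠ 0 := by
      by_contra h
      push_neg at h
      exact hnz ⟨hR₀0, h⟩
    obtain ⟨i, hi0⟩ := this
    have hpos : 0 < ((-((A i)ᵀ * P + P * A i)) * R i).trace :=
      weak_toa_trace_mul_pos (hQ i) (hR i).2 hi0
    have : 0 < (P * R₀).trace + ∑ i, ((-((A i)ᵀ * P + P * A i)) * R i).trace :=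
      add_pos_of_nonneg_of_pos h0 (Finset.sum_pos' hi ⟨i, Finset.mem_univ i, hpos⟩)
    linarith
  · have hpos : 0 < (P * R₀).trace := weak_toa_trace_mul_pos hP hR₀ hR₀0
    have : 0 ≤ ∑ i, ((-((A i)ᵀ * P + P * A i)) * R i).trace := Finset.sum_nonneg hi
    linarith
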